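/- Let a11 be invertible and σ = a22 - a21 * a11⁻¹ * a12 its Schur complement. Then the rank of S equals the cardinality of int plus the rank of σ, i.e. S.rank = Fintype.card int + σ.rank. -/
import Mathlib

open Matrix

lemma range_prodMap' {R M M' N N' : Type*} [CommRing R]
    [AddCommGroup M] [AddCommGroup M'] [AddCommGroup N] [AddCommGroup N']
    [Module R M] [Module R M'] [Module R N] [Module R N']
    (f : M →ₗ[R] N) (g : M' →ₗ[R] N') :
    LinearMap.range (f.prodMap g) = (LinearMap.range f).prod (LinearMap.range g) := by
  ext ⟨x, y⟩
  simp only [LinearMap.mem_range, Submodule.mem_prod, Prod.ext_iff, LinearMap.prodMap_apply]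
  constructor
  · rintro ⟨⟨a, b⟩, ha, hb⟩
    exact ⟨⟨a, ha⟩, ⟨b, hb⟩⟩
  · rintro ⟨⟨a, ha⟩, ⟨b, hb⟩⟩
    exact ⟨(a, b), ha, hb⟩

/-- `p.prod q` is linearly equivalent to `p × q`. -/
def prodSubEquiv {R M M' : Type*} [CommRing R] [AddCommGroup M] [AddCommGroup M']
    [Module R M] [Module R M'] (p : Submodule R M) (q : Submodule R M') :
    (p.prod q) ≃ₗ[R] p × q where
  toFun x := (⟨x.1.1, x.2.1⟩, ⟨x.1.2, x.2.2⟩)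
  invFun y := ⟨(y.1.1, y.2.1), ⟨y.1.2, y.2.2⟩⟩
  map_add' _ _ := rfl
  map_smul' _ _ := rfl
  left_inv _ := rfl
  right_inv _ := rfl

lemma finrank_prod_sub {M M' : Type*} [AddCommGroup M] [AddCommGroup M']
    [Module ℝ M] [Module ℝ M'] (p : Submodule ℝ M) (q : Submodule ℝ M')
    [FiniteDimensional ℝ p] [FiniteDimensional ℝ q] :
    Module.finrank ℝ (p.prod q) = Module.finrank ℝ p + Module.finrank ℝ q := by
  rw [(prodSubEquiv p q).finrank_eq, Module.finrank_prod]

lemma rank_fromBlocks_diag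
    {m n : Type*} [Fintype m] [Fintype n] [DecidableEq m] [DecidableEq n]
    (A : Matrix m m ℝ) (D : Matrix n n ℝ) :
    (Matrix.fromBlocks A 0 0 D).rank = A.rank + D.rank := by
  classical
  let e := LinearEquiv.sumArrowLequivProdArrow m n ℝ ℝ
  have key : (Matrix.fromBlocks A 0 0 D).mulVecLin =
      (e.symm : ((m → ℝ) × (n → ℝ)) →ₗ[ℝ] (m ⊕ n → ℝ)) ∘ₗ
        (A.mulVecLin.prodMap D.mulVecLin) ∘ₗ (e : (m ⊕ n → ℝ) →ₗ[ℝ] (m → ℝ) × (n → ℝ)) := by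
    ext x i
    cases i <;>
      simp [e, mulVec, fromBlocks, dotProduct, Fintype.sum_sum_type,
        LinearEquiv.sumArrowLequivProdArrow, Sum.elim]
  have hrange : LinearMap.range (Matrix.fromBlocks A 0 0 D).mulVecLin =
      (LinearMap.range (A.mulVecLin.prodMap D.mulVecLin)).map (e.symm : _ →ₗ[ℝ] _) := by
    rw [key]
    rw [LinearMap.range_comp, LinearMap.range_comp, LinearEquiv.range, Submodule.map_top]
  rw [Matrix.rank, hrange, LinearEquiv.finrank_map_eq e.symm, range_prodMap']
  rw [finrank_prod_sub]
  rfl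

theorem schur_rank
    {int ext : Type*} [Fintype int] [Fintype ext] [DecidableEq int] [DecidableEq ext]
    (a11 : Matrix int int ℝ) (a12 : Matrix int ext ℝ)
    (a21 : Matrix ext int ℝ) (a22 : Matrix ext ext ℝ)
    (h : IsUnit a11.det) :
    (Matrix.fromBlocks a11 a12 a21 a22).rank =
      Fintype.card int + (a22 - a21 * a11⁻¹ * a12).rank := by
  classical
  have inv : Invertible a11 := invertibleOfIsUnitDet _ h
  have hdecomp := Matrix.fromBlocks_eq_of_invertible₁₁ a11 a12 a21 a22
  have hL : IsUnit (Matrix.fromBlocks (1 : Matrix int int ℝ) 0 (a21 * ⅟a11) 1).det := by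
    rw [Matrix.det_fromBlocks_zero₁₂]
    simp
  have hU : IsUnit (Matrix.fromBlocks (1 : Matrix int int ℝ) (⅟a11 * a12) 0 1).det := by
    rw [Matrix.det_fromBlocks_zero₂₁]
    simp
  rw [hdecomp, Matrix.rank_mul_eq_left_of_isUnit_det _ _ hU,
    Matrix.rank_mul_eq_right_of_isUnit_det _ _ hL, rank_fromBlocks_diag,
    Matrix.rank_of_isUnit _ (isUnit_iff_isUnit_det a11 |>.2 h), invOf_eq_nonsing_inv]
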